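/- arXiv:1810.05679 — 2 statements merged into one kernel-verified Lean document; each statement's English description precedes it below -/
import Mathlib

section
/- Let X, Y, Z be nonzero vectors in R^p. If cos(X,Y) ≥ 1 - α and cos(Y,Z) ≤ β with α ≥ 0, then cos(X,Z) ≤ β + sqrt(2α). -/
/-- If `cos(X,Y) ≥ 1 - α` and `cos(Y,Z) ≤ β` for nonzero vectors `X, Y, Z ∈ ℝ^p`
with `α ≥ 0`, then `cos(X,Z) ≤ β + √(2α)`, where
`cos(u,v) = ⟨u,v⟩ / (‖u‖ ‖v‖)` is the cosine similarity. -/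
theorem cos_upper_bound_of_cos_bounds {p : ℕ} (X Y Z : EuclideanSpace ℝ (Fin p))
    (hX : X ≠ 0) (hY : Y ≠ 0) (hZ : Z ≠ 0) (α β : ℝ) (hα : 0 ≤ α)
    (hXY : 1 - α ≤ (inner ℝ X Y : ℝ) / (‖X‖ * ‖Y‖))
    (hYZ : (inner ℝ Y Z : ℝ) / (‖Y‖ * ‖Z‖) ≤ β) :
    (inner ℝ X Z : ℝ) / (‖X‖ * ‖Z‖) ≤ β + Real.sqrt (2 * α) := by
  set u := ‖X‖⁻¹ • X with hu_def
  set v := ‖Y‖⁻¹ • Y with hv_def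
  set w := ‖Z‖⁻¹ • Z with hw_def
  have hXn : (0:ℝ) < ‖X‖ := norm_pos_iff.mpr hX
  have hYn : (0:ℝ) < ‖Y‖ := norm_pos_iff.mpr hY
  have hZn : (0:ℝ) < ‖Z‖ := norm_pos_iff.mpr hZ
  have hu : ‖u‖ = 1 := norm_smul_inv_norm hX
  have hv : ‖v‖ = 1 := norm_smul_inv_norm hY
  have hw : ‖w‖ = 1 := norm_smul_inv_norm hZ
  have huv : (inner ℝ u v : ℝ) = (inner ℝ X Y : ℝ) / (‖X‖ * ‖Y‖) := by
    rw [hu_def, hv_def, real_inner_smul_left, real_inner_smul_right]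
    field_simp
  have huw : (inner ℝ u w : ℝ) = (inner ℝ X Z : ℝ) / (‖X‖ * ‖Z‖) := by
    rw [hu_def, hw_def, real_inner_smul_left, real_inner_smul_right]
    field_simp
  have hvw : (inner ℝ v w : ℝ) = (inner ℝ Y Z : ℝ) / (‖Y‖ * ‖Z‖) := by
    rw [hv_def, hw_def, real_inner_smul_left, real_inner_smul_right]
    field_simp
  have hsq : ‖u - v‖ ^ 2 ≤ 2 * α := by
    have := @norm_sub_sq_real (EuclideanSpace ℝ (Fin p)) _ _ u v
    rw [hu, hv] at this
    rw [huv] at this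
    nlinarith
  have hnorm : ‖u - v‖ ≤ Real.sqrt (2 * α) := by
    have := Real.sqrt_le_sqrt hsq
    rwa [Real.sqrt_sq (norm_nonneg _)] at this
  have hcs : (inner ℝ (u - v) w : ℝ) ≤ ‖u - v‖ := by
    calc (inner ℝ (u - v) w : ℝ) ≤ ‖u - v‖ * ‖w‖ := real_inner_le_norm _ _
      _ = ‖u - v‖ := by rw [hw, mul_one]
  rw [inner_sub_left] at hcs
  rw [← huw]
  rw [hvw] at hcs
  linarith
end

section
/- Let X be an n × p matrix with σ_p(X) > 0, W a p × p orthogonal matrix, Π an n × n matrix with each row of ΠX of unit norm and m rows of Π differing from the identity, and V an n × p matrix. Set Δ = γ X^T(Π − I)X W + X^T V for γ ∈ (0,1]. If γ σ_p(X)^2 > 2γm + ||X^T V||_F, then the polar factor Ŵ = U(X^T Y) of X^T Y, where Y = γ Π X W + V, satisfies ||Ŵ − W||_F ≤ (2γm + ||X^T V||_F)/(γ σ_p(X)^2 − 2γm − ||X^T V||_F). -/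
open Matrix

/-- Euclidean norm of a vector in `ℝ^k` given as a function. -/
noncomputable def vecNorm {k : ℕ} (v : Fin k → ℝ) : ℝ := Real.sqrt (∑ i, v i ^ 2)

/-- Frobenius norm of a real matrix. -/
noncomputable def frobNorm {a b : ℕ} (M : Matrix (Fin a) (Fin b) ℝ) : ℝ :=
  Real.sqrt (∑ i, ∑ j, M i j ^ 2)

theorem Matrix.isHermitian_transpose_mul_self {m n : Type*} [Fintype m] (M : Matrix m n ℝ) :
    (Mᵀ * M).IsHermitian := by
  simpa using isHermitian_conjTranspose_mul_self M

noncomputable def Matrix.PosSemidef.sqrt {n : Type*} [Fintype n] [DecidableEq n]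
    {A : Matrix n n ℝ} (hA : A.PosSemidef) : Matrix n n ℝ :=
  hA.1.eigenvectorUnitary.1 * diagonal ((√·) ∘ hA.1.eigenvalues) *
    (star hA.1.eigenvectorUnitary : Matrix n n ℝ)

/-- The squared smallest singular value `σ_p(M)²`: the smallest eigenvalue of
`Mᵀ M`. -/
noncomputable def sigmaMinSq {m : Type*} [Fintype m] {p : ℕ}
    (M : Matrix m (Fin p) ℝ) : ℝ :=
  ⨅ j, (Matrix.isHermitian_transpose_mul_self M).eigenvalues j

/-- The polar factor `U(A) = A (Aᵀ A)^{-1/2}` of a square real matrix. -/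
noncomputable def polarFactor {a : ℕ} (A : Matrix (Fin a) (Fin a) ℝ) :
    Matrix (Fin a) (Fin a) ℝ :=
  A * (Matrix.PosSemidef.sqrt (Matrix.posSemidef_conjTranspose_mul_self A))⁻¹

lemma Matrix.PosSemidef.posSemidef_sqrt {n : Type*} [Fintype n] [DecidableEq n]
    {A : Matrix n n ℝ} (hA : A.PosSemidef) : hA.sqrt.PosSemidef := by
  have := (posSemidef_diagonal_iff.mpr fun i => Real.sqrt_nonneg (hA.1.eigenvalues i)).mul_mul_conjTranspose_same
    (hA.1.eigenvectorUnitary : Matrix n n ℝ)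
  convert this using 1
  simp [Matrix.PosSemidef.sqrt, Unitary.coe_star, star_eq_conjTranspose]
  rfl

lemma Matrix.PosSemidef.sqrt_mul_self {n : Type*} [Fintype n] [DecidableEq n]
    {A : Matrix n n ℝ} (hA : A.PosSemidef) : hA.sqrt * hA.sqrt = A := by
  have hU : (star hA.1.eigenvectorUnitary : Matrix n n ℝ) * (hA.1.eigenvectorUnitary : Matrix n n ℝ) = 1 :=
    Unitary.coe_star_mul_self _
  have hD : diagonal ((√·) ∘ hA.1.eigenvalues) * diagonal ((√·) ∘ hA.1.eigenvalues)
      = diagonal hA.1.eigenvalues := by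
    rw [diagonal_mul_diagonal]
    congr 1
    funext i
    exact Real.mul_self_sqrt (hA.eigenvalues_nonneg i)
  unfold Matrix.PosSemidef.sqrt
  calc _ = (hA.1.eigenvectorUnitary : Matrix n n ℝ) * (diagonal ((√·) ∘ hA.1.eigenvalues) *
        ((star hA.1.eigenvectorUnitary : Matrix n n ℝ) * (hA.1.eigenvectorUnitary : Matrix n n ℝ)) *
        diagonal ((√·) ∘ hA.1.eigenvalues)) * (star hA.1.eigenvectorUnitary : Matrix n n ℝ) := by
          simp only [Matrix.mul_assoc]
    _ = A := by
      rw [hU, Matrix.mul_one, hD]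
      conv_rhs => rw [hA.1.spectral_theorem]
      simp [Unitary.conjStarAlgAut_apply]

/-! ### Auxiliary lemmas -/

noncomputable def toEuc {ι : Type*} [Fintype ι] (u : ι → ℝ) : EuclideanSpace ℝ ι :=
  (WithLp.equiv 2 (ι → ℝ)).symm u

lemma toEuc_norm {ι : Type*} [Fintype ι] (u : ι → ℝ) :
    ‖toEuc u‖ = Real.sqrt (∑ i, u i ^ 2) := by
  rw [toEuc, EuclideanSpace.norm_eq]; simp [sq_abs]

lemma toEuc_add {ι : Type*} [Fintype ι] (u v : ι → ℝ) : toEuc (u + v) = toEuc u + toEuc v := rfl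
lemma toEuc_sub {ι : Type*} [Fintype ι] (u v : ι → ℝ) : toEuc (u - v) = toEuc u - toEuc v := rfl
lemma toEuc_smul {ι : Type*} [Fintype ι] (c : ℝ) (u : ι → ℝ) : toEuc (c • u) = c • toEuc u := rfl

lemma toEuc_inner {ι : Type*} [Fintype ι] (u v : ι → ℝ) :
    inner ℝ (toEuc u) (toEuc v) = ∑ i, u i * v i := by
  rw [PiLp.inner_apply]; exact Finset.sum_congr rfl fun i _ => by simp [toEuc, mul_comm]

lemma toEuc_sum {ι κ : Type*} [Fintype ι] (s : Finset κ) (f : κ → ι → ℝ) :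
    toEuc (∑ i ∈ s, f i) = ∑ i ∈ s, toEuc (f i) := by
  classical
  induction s using Finset.cons_induction with
  | empty => rfl
  | cons i s hi ih => rw [Finset.sum_cons, Finset.sum_cons, toEuc_add, ih]

lemma euc_norm_sq {ι : Type*} [Fintype ι] (u : EuclideanSpace ℝ ι) :
    ‖u‖ ^ 2 = ∑ i, u i ^ 2 := by
  rw [EuclideanSpace.norm_eq, Real.sq_sqrt (by positivity)]
  simp [sq_abs]

lemma vecNorm_eq {k : ℕ} (v : Fin k → ℝ) : vecNorm v = ‖toEuc v‖ := (toEuc_norm v).symm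

lemma frobNorm_eq {a b : ℕ} (M : Matrix (Fin a) (Fin b) ℝ) :
    frobNorm M = ‖toEuc (fun ij : Fin a × Fin b => M ij.1 ij.2)‖ := by
  rw [toEuc_norm, frobNorm, Fintype.sum_prod_type]

lemma frobNorm_nonneg {a b : ℕ} (M : Matrix (Fin a) (Fin b) ℝ) : 0 ≤ frobNorm M :=
  Real.sqrt_nonneg _

lemma frobNorm_sub_le {a b : ℕ} (M N : Matrix (Fin a) (Fin b) ℝ) :
    frobNorm (M - N) ≤ frobNorm M + frobNorm N := by
  rw [frobNorm_eq, frobNorm_eq, frobNorm_eq]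
  have h : (fun ij : Fin a × Fin b => (M - N) ij.1 ij.2)
      = (fun ij : Fin a × Fin b => M ij.1 ij.2) - (fun ij => N ij.1 ij.2) := rfl
  rw [h, toEuc_sub]
  exact norm_sub_le _ _

lemma frobNorm_add_le {a b : ℕ} (M N : Matrix (Fin a) (Fin b) ℝ) :
    frobNorm (M + N) ≤ frobNorm M + frobNorm N := by
  rw [frobNorm_eq, frobNorm_eq, frobNorm_eq]
  have h : (fun ij : Fin a × Fin b => (M + N) ij.1 ij.2)
      = (fun ij : Fin a × Fin b => M ij.1 ij.2) + (fun ij => N ij.1 ij.2) := rfl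
  rw [h, toEuc_add]
  exact norm_add_le _ _

lemma frobNorm_smul {a b : ℕ} (c : ℝ) (M : Matrix (Fin a) (Fin b) ℝ) :
    frobNorm (c • M) = |c| * frobNorm M := by
  rw [frobNorm_eq, frobNorm_eq]
  have h : (fun ij : Fin a × Fin b => (c • M) ij.1 ij.2)
      = c • (fun ij : Fin a × Fin b => M ij.1 ij.2) := rfl
  rw [h, toEuc_smul, norm_smul]; simp [Real.norm_eq_abs]

lemma frobNorm_sum_le {a b : ℕ} {ι : Type*} (s : Finset ι) (M : ι → Matrix (Fin a) (Fin b) ℝ) :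
    frobNorm (∑ i ∈ s, M i) ≤ ∑ i ∈ s, frobNorm (M i) := by
  simp only [frobNorm_eq]
  have h : (fun ij : Fin a × Fin b => (∑ i ∈ s, M i) ij.1 ij.2)
      = ∑ i ∈ s, (fun ij : Fin a × Fin b => M i ij.1 ij.2) := by
    funext ij
    rw [Finset.sum_apply]
    simp [Matrix.sum_apply]
  rw [h, toEuc_sum]
  exact norm_sum_le _ _

lemma vecNorm_nonneg {k : ℕ} (v : Fin k → ℝ) : 0 ≤ vecNorm v := Real.sqrt_nonneg _

lemma vecNorm_sub_le {k : ℕ} (u v : Fin k → ℝ) : vecNorm (u - v) ≤ vecNorm u + vecNorm v := by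
  rw [vecNorm_eq, vecNorm_eq, vecNorm_eq, toEuc_sub]; exact norm_sub_le _ _

lemma matrix_inner_le {a b : ℕ} (M N : Matrix (Fin a) (Fin b) ℝ) :
    ∑ i, ∑ j, M i j * N i j ≤ frobNorm M * frobNorm N := by
  have h : ∑ i, ∑ j, M i j * N i j
      = inner ℝ (toEuc fun ij : Fin a × Fin b => M ij.1 ij.2)
          (toEuc fun ij : Fin a × Fin b => N ij.1 ij.2) := by
    rw [toEuc_inner, Fintype.sum_prod_type]
  rw [h, frobNorm_eq, frobNorm_eq]
  exact real_inner_le_norm _ _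

section spec
variable {p : ℕ} {H : Matrix (Fin p) (Fin p) ℝ}

lemma real_herm_transpose (hH : H.IsHermitian) : Hᵀ = H := by
  ext i j
  have h := congrFun (congrFun hH i) j
  simpa [Matrix.conjTranspose_apply] using h

lemma repr_mulVec (hH : H.IsHermitian) (x : Fin p → ℝ) (j : Fin p) :
    hH.eigenvectorBasis.repr (toEuc (H *ᵥ x)) j
      = hH.eigenvalues j * hH.eigenvectorBasis.repr (toEuc x) j := by
  rw [OrthonormalBasis.repr_apply_apply, OrthonormalBasis.repr_apply_apply]
  have h1 : (inner ℝ (hH.eigenvectorBasis j) (toEuc (H *ᵥ x)) : ℝ)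
      = ⇑(hH.eigenvectorBasis j) ⬝ᵥ H *ᵥ x := by
    rw [show (hH.eigenvectorBasis j : EuclideanSpace ℝ (Fin p))
      = toEuc ⇑(hH.eigenvectorBasis j) from rfl]
    rw [toEuc_inner]; rfl
  have h2 : (inner ℝ (hH.eigenvectorBasis j) (toEuc x) : ℝ)
      = ⇑(hH.eigenvectorBasis j) ⬝ᵥ x := by
    rw [show (hH.eigenvectorBasis j : EuclideanSpace ℝ (Fin p))
      = toEuc ⇑(hH.eigenvectorBasis j) from rfl]
    rw [toEuc_inner]; rfl
  rw [h1, h2, Matrix.dotProduct_mulVec, ← Matrix.mulVec_transpose, real_herm_transpose hH,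
    hH.mulVec_eigenvectorBasis, smul_dotProduct]
  rfl

lemma sumsq_eq_repr (hH : H.IsHermitian) (u : Fin p → ℝ) :
    ∑ i, u i ^ 2 = ∑ j, (hH.eigenvectorBasis.repr (toEuc u) j) ^ 2 := by
  have h1 : ∑ i, u i ^ 2 = ‖toEuc u‖ ^ 2 := by
    rw [euc_norm_sq]; rfl
  rw [h1, ← hH.eigenvectorBasis.repr.norm_map (toEuc u), euc_norm_sq]

lemma dot_mulVec_eq_repr (hH : H.IsHermitian) (x : Fin p → ℝ) :
    x ⬝ᵥ H *ᵥ x = ∑ j, hH.eigenvalues j * (hH.eigenvectorBasis.repr (toEuc x) j) ^ 2 := by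
  have h0 : x ⬝ᵥ H *ᵥ x = (inner ℝ (toEuc x) (toEuc (H *ᵥ x)) : ℝ) := by
    rw [toEuc_inner]; rfl
  rw [h0, ← hH.eigenvectorBasis.repr.inner_map_map (toEuc x) (toEuc (H *ᵥ x)),
    PiLp.inner_apply]
  simp only [RCLike.inner_apply, starRingEnd_apply, star_trivial]
  refine Finset.sum_congr rfl fun j _ => ?_
  rw [repr_mulVec hH]; ring

lemma mulVec_sumsq_eq_repr (hH : H.IsHermitian) (x : Fin p → ℝ) :
    ∑ i, (H *ᵥ x) i ^ 2
      = ∑ j, (hH.eigenvalues j) ^ 2 * (hH.eigenvectorBasis.repr (toEuc x) j) ^ 2 := by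
  rw [sumsq_eq_repr hH]
  refine Finset.sum_congr rfl fun j _ => ?_
  rw [repr_mulVec hH]; ring

lemma herm_quad_lower (hH : H.IsHermitian) {c : ℝ} (hev : ∀ i, c ≤ hH.eigenvalues i)
    (x : Fin p → ℝ) : c * ∑ i, x i ^ 2 ≤ x ⬝ᵥ H *ᵥ x := by
  rw [dot_mulVec_eq_repr hH, sumsq_eq_repr hH, Finset.mul_sum]
  exact Finset.sum_le_sum fun j _ => mul_le_mul_of_nonneg_right (hev j) (sq_nonneg _)

lemma herm_mulVec_sq_lower (hH : H.IsHermitian) {c : ℝ} (hc : 0 ≤ c)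
    (hev : ∀ i, c ≤ hH.eigenvalues i) (x : Fin p → ℝ) :
    c ^ 2 * ∑ i, x i ^ 2 ≤ ∑ i, (H *ᵥ x) i ^ 2 := by
  rw [mulVec_sumsq_eq_repr hH, sumsq_eq_repr hH, Finset.mul_sum]
  refine Finset.sum_le_sum fun j _ => mul_le_mul_of_nonneg_right ?_ (sq_nonneg _)
  exact pow_le_pow_left₀ hc (hev j) 2

lemma herm_ev_lower_of_mulVec (hH : H.IsHermitian) (hpsd : H.PosSemidef) {c : ℝ} (hc : 0 ≤ c)
    (hx : ∀ x : Fin p → ℝ, c ^ 2 * ∑ i, x i ^ 2 ≤ ∑ i, (H *ᵥ x) i ^ 2) (i : Fin p) :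
    c ≤ hH.eigenvalues i := by
  set v : Fin p → ℝ := ⇑(hH.eigenvectorBasis i) with hv
  have hb := hx v
  rw [hv, hH.mulVec_eigenvectorBasis, ← hv] at hb
  have hn : ∑ j, v j ^ 2 = 1 := by
    have h1 := hH.eigenvectorBasis.orthonormal.1 i
    have h2 : ‖hH.eigenvectorBasis i‖ ^ 2 = 1 := by rw [h1]; norm_num
    rw [euc_norm_sq] at h2; exact h2
  have hb2 : ∑ j, ((hH.eigenvalues i • v) j) ^ 2 = hH.eigenvalues i ^ 2 := by
    simp only [Pi.smul_apply, smul_eq_mul, mul_pow, ← Finset.mul_sum, hn, mul_one]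
  rw [hb2, hn, mul_one] at hb
  have hev0 := hpsd.eigenvalues_nonneg i
  nlinarith [hb, hc, hev0]

end spec

lemma fn2_eq_trace {a b : ℕ} (M : Matrix (Fin a) (Fin b) ℝ) :
    ∑ i, ∑ j, M i j ^ 2 = Matrix.trace (Mᵀ * M) := by
  rw [Finset.sum_comm, Matrix.trace]
  refine Finset.sum_congr rfl fun j _ => ?_
  simp [Matrix.diag, Matrix.mul_apply, sq]

lemma frob_eq_sqrt_trace {a b : ℕ} (M : Matrix (Fin a) (Fin b) ℝ) :
    frobNorm M = Real.sqrt (Matrix.trace (Mᵀ * M)) := by rw [frobNorm, fn2_eq_trace]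

lemma frobNorm_mul_orth_left {a b : ℕ} (Q : Matrix (Fin a) (Fin a) ℝ)
    (hQ : Qᵀ * Q = 1) (M : Matrix (Fin a) (Fin b) ℝ) : frobNorm (Q * M) = frobNorm M := by
  rw [frob_eq_sqrt_trace, frob_eq_sqrt_trace, Matrix.transpose_mul]
  congr 1
  rw [Matrix.mul_assoc, ← Matrix.mul_assoc Qᵀ, hQ, Matrix.one_mul]

lemma frobNorm_mul_orth_right {a b : ℕ} (Q : Matrix (Fin b) (Fin b) ℝ)
    (hQ : Q * Qᵀ = 1) (M : Matrix (Fin a) (Fin b) ℝ) : frobNorm (M * Q) = frobNorm M := by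
  rw [frob_eq_sqrt_trace, frob_eq_sqrt_trace, Matrix.transpose_mul]
  congr 1
  rw [Matrix.trace_mul_comm, Matrix.mul_assoc, ← Matrix.mul_assoc Q Qᵀ Mᵀ, hQ,
    Matrix.one_mul, Matrix.trace_mul_comm]

lemma frobNorm_transpose {a b : ℕ} (M : Matrix (Fin a) (Fin b) ℝ) :
    frobNorm Mᵀ = frobNorm M := by
  rw [frobNorm, frobNorm, Finset.sum_comm]; rfl

lemma frobNorm_neg {a b : ℕ} (M : Matrix (Fin a) (Fin b) ℝ) : frobNorm (-M) = frobNorm M := by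
  rw [frobNorm, frobNorm]; simp

lemma inner_mul_left {p : ℕ} (S E : Matrix (Fin p) (Fin p) ℝ) :
    ∑ i, ∑ j, E i j * (S * E) i j
      = ∑ j, (fun i => E i j) ⬝ᵥ S *ᵥ (fun i => E i j) := by
  rw [Finset.sum_comm]
  refine Finset.sum_congr rfl fun j _ => ?_
  simp only [Matrix.mul_apply, dotProduct, Matrix.mulVec]

lemma inner_mul_right {p : ℕ} (E H : Matrix (Fin p) (Fin p) ℝ) :
    ∑ i, ∑ j, E i j * (E * H) i j = ∑ i, (E i) ⬝ᵥ H *ᵥ (E i) := by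
  refine Finset.sum_congr rfl fun i _ => ?_
  simp only [Matrix.mul_apply, dotProduct, Matrix.mulVec, Finset.mul_sum]
  rw [Finset.sum_comm]
  refine Finset.sum_congr rfl fun k _ => Finset.sum_congr rfl fun j _ => ?_
  ring

lemma mulVec_sumsq_eq {a b : ℕ} (M : Matrix (Fin a) (Fin b) ℝ) (x : Fin b → ℝ) :
    ∑ i, (M *ᵥ x) i ^ 2 = x ⬝ᵥ (Mᵀ * M) *ᵥ x := by
  rw [← Matrix.mulVec_mulVec, Matrix.dotProduct_mulVec, Matrix.vecMul_transpose]
  simp [dotProduct, sq]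

lemma mulVec_sumsq_le {a b : ℕ} (M : Matrix (Fin a) (Fin b) ℝ) (x : Fin b → ℝ) :
    ∑ i, (M *ᵥ x) i ^ 2 ≤ (∑ i, ∑ j, M i j ^ 2) * ∑ j, x j ^ 2 := by
  rw [Finset.sum_mul]
  refine Finset.sum_le_sum fun i _ => ?_
  simpa [Matrix.mulVec, dotProduct] using
    Finset.sum_mul_sq_le_sq_mul_sq Finset.univ (fun j => M i j) x

lemma sumsq_pos_of_ne_zero {k : ℕ} {v : Fin k → ℝ} (hv : v ≠ 0) : 0 < ∑ i, v i ^ 2 := by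
  rcases Function.ne_iff.mp hv with ⟨i, hi⟩
  rw [Pi.zero_apply] at hi
  have h1 : (0:ℝ) < v i ^ 2 := by positivity
  calc (0:ℝ) < v i ^ 2 := h1
    _ ≤ ∑ j, v j ^ 2 :=
      Finset.single_le_sum (fun j _ => sq_nonneg (v j)) (Finset.mem_univ i)

set_option maxHeartbeats 1000000 in
/-- Error bound for the initial spherical regression estimator: with `X` having
unit-norm rows and `σ_p(X)² > 0`, `W` orthogonal, `P` a mapping matrix with
unit-norm rows of `P X` and `m` rows differing from the identity, `V` a noise
matrix, `γ ∈ (0,1]`, and `Y = γ P X W + V`, if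
`γ σ_p(X)² > 2γm + ‖Xᵀ V‖_F`, then the polar factor `Ŵ = U(Xᵀ Y)` satisfies
`‖Ŵ − W‖_F ≤ (2γm + ‖Xᵀ V‖_F)/(γ σ_p(X)² − 2γm − ‖Xᵀ V‖_F)`. -/
theorem initial_W_error_bound {n p : ℕ} (X : Matrix (Fin n) (Fin p) ℝ)
    (hrows : ∀ i, vecNorm (X i) = 1) (hσ : 0 < sigmaMinSq X)
    (W : Matrix (Fin p) (Fin p) ℝ) (hW : W * Wᵀ = 1)
    (P : Matrix (Fin n) (Fin n) ℝ) (hPX : ∀ i, vecNorm ((P * X) i) = 1)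
    (m : ℕ)
    (hm : (@Finset.filter (Fin n) (fun i => P i ≠ (1 : Matrix (Fin n) (Fin n) ℝ) i)
      (fun _ => inferInstance) Finset.univ).card = m)
    (V : Matrix (Fin n) (Fin p) ℝ) (γ : ℝ) (hγ0 : 0 < γ) (hγ1 : γ ≤ 1)
    (Y : Matrix (Fin n) (Fin p) ℝ) (hY : Y = γ • (P * X * W) + V)
    (hgap : 2 * γ * m + frobNorm (Xᵀ * V) < γ * sigmaMinSq X) :
    frobNorm (polarFactor (Xᵀ * Y) - W) ≤
      (2 * γ * m + frobNorm (Xᵀ * V)) /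
        (γ * sigmaMinSq X - 2 * γ * m - frobNorm (Xᵀ * V)) := by
  classical
  have hT : (Xᵀ * X).IsHermitian := Matrix.isHermitian_transpose_mul_self X
  set σ : ℝ := sigmaMinSq X with hσdef
  have hσev : ∀ j, σ ≤ hT.eigenvalues j := fun j =>
    ciInf_le (Set.Finite.bddBelow (Set.finite_range _)) j
  have hσ0 : 0 < σ := hσ
  set β : ℝ := 2 * γ * m + frobNorm (Xᵀ * V) with hβdef
  set s : ℝ := γ * σ with hsdef
  have hβs : β < s := hgap
  have hβ0 : 0 ≤ β := by
    have := frobNorm_nonneg (Xᵀ * V)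
    have hm0 : (0:ℝ) ≤ 2 * γ * m := by positivity
    rw [hβdef]; linarith
  have hs0 : 0 < s := lt_of_le_of_lt hβ0 hβs
  have hsβ : 0 < s - β := sub_pos.mpr hβs
  set B : Matrix (Fin p) (Fin p) ℝ := Xᵀ * Y with hBdef
  set A : Matrix (Fin p) (Fin p) ℝ := γ • (Xᵀ * X * W) with hAdef
  set Δ : Matrix (Fin p) (Fin p) ℝ := B - A with hΔdef
  have hBA : B = A + Δ := by rw [hΔdef, add_sub_cancel]
  have hWtW : Wᵀ * W = 1 := mul_eq_one_comm.mp hW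
  -- Step 1 : frobNorm Δ ≤ β
  have hΔβ : frobNorm Δ ≤ β := by
    set Z : Matrix (Fin n) (Fin p) ℝ := P * X - X with hZdef
    have hYX : B = γ • ((Xᵀ * (P * X)) * W) + Xᵀ * V := by
      rw [hBdef, hY, Matrix.mul_add, Matrix.mul_smul, ← Matrix.mul_assoc]
    have hXZ : Xᵀ * (P * X) = Xᵀ * Z + Xᵀ * X := by
      rw [hZdef, Matrix.mul_sub, sub_add_cancel]
    have hΔeq : Δ = γ • ((Xᵀ * Z) * W) + Xᵀ * V := by
      rw [hΔdef, hYX, hXZ, hAdef, Matrix.add_mul, smul_add]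
      abel
    have hXZ2m : frobNorm (Xᵀ * Z) ≤ 2 * m := by
      set T : Finset (Fin n) :=
        Finset.univ.filter fun i => P i ≠ (1 : Matrix (Fin n) (Fin n) ℝ) i with hTdef
      have hsum : Xᵀ * Z = ∑ i ∈ T, Matrix.of (fun j k => X i j * Z i k) := by
        have huniv : Xᵀ * Z = ∑ i ∈ Finset.univ, Matrix.of (fun j k => X i j * Z i k) := by
          ext j k
          simp [Matrix.mul_apply, Matrix.sum_apply, Matrix.transpose_apply]
        rw [huniv]
        refine (Finset.sum_subset (Finset.subset_univ T) ?_).symm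
        intro i _ hiT
        have hPi : P i = (1 : Matrix (Fin n) (Fin n) ℝ) i := by
          by_contra hne
          exact hiT (Finset.mem_filter.mpr ⟨Finset.mem_univ i, hne⟩)
        have hZi : ∀ k, Z i k = 0 := by
          intro k
          rw [hZdef, Matrix.sub_apply, Matrix.mul_apply]
          have : ∀ l, P i l = (if i = l then (1:ℝ) else 0) := by
            intro l; rw [hPi]; exact Matrix.one_apply
          simp [this]
        ext j k
        simp [hZi k]
      have hterm : ∀ i ∈ T, frobNorm (Matrix.of (fun j k => X i j * Z i k)) ≤ 2 := by
        intro i _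
        have hfe : frobNorm (Matrix.of (fun j k => X i j * Z i k))
            = vecNorm (X i) * vecNorm (Z i) := by
          rw [frobNorm, vecNorm, vecNorm, ← Real.sqrt_mul (by positivity)]
          congr 1
          rw [Finset.sum_mul_sum]
          refine Finset.sum_congr rfl fun j _ => Finset.sum_congr rfl fun k _ => ?_
          simp [Matrix.of_apply]; ring
        have hZi2 : vecNorm (Z i) ≤ 2 := by
          have hz : Z i = (P * X) i - X i := by
            funext k; rw [hZdef]; rfl
          rw [hz]
          calc vecNorm ((P * X) i - X i) ≤ vecNorm ((P * X) i) + vecNorm (X i) :=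
                vecNorm_sub_le _ _
            _ = 2 := by rw [hPX i, hrows i]; norm_num
        rw [hfe, hrows i, one_mul]
        exact hZi2
      calc frobNorm (Xᵀ * Z) ≤ ∑ i ∈ T, frobNorm (Matrix.of (fun j k => X i j * Z i k)) := by
            rw [hsum]; exact frobNorm_sum_le _ _
        _ ≤ ∑ _i ∈ T, (2:ℝ) := Finset.sum_le_sum hterm
        _ = 2 * m := by rw [Finset.sum_const, ← hm, hTdef, nsmul_eq_mul, mul_comm]; congr
    calc frobNorm Δ ≤ frobNorm (γ • ((Xᵀ * Z) * W)) + frobNorm (Xᵀ * V) := by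
          rw [hΔeq]; exact frobNorm_add_le _ _
      _ = γ * frobNorm (Xᵀ * Z) + frobNorm (Xᵀ * V) := by
          rw [frobNorm_smul, abs_of_pos hγ0, frobNorm_mul_orth_right W hW]
      _ ≤ γ * (2 * m) + frobNorm (Xᵀ * V) := by
          have := mul_le_mul_of_nonneg_left hXZ2m (le_of_lt hγ0)
          linarith
      _ = β := by rw [hβdef]; ring
  -- Step 2 : vector lower/upper bounds
  have hWx : ∀ x : Fin p → ℝ, ∑ j, (W *ᵥ x) j ^ 2 = ∑ j, x j ^ 2 := by
    intro x
    rw [mulVec_sumsq_eq, hWtW, Matrix.one_mulVec]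
    simp [dotProduct, sq]
  have hAx : ∀ x : Fin p → ℝ, s ^ 2 * ∑ j, x j ^ 2 ≤ ∑ i, (A *ᵥ x) i ^ 2 := by
    intro x
    have h1 : A *ᵥ x = γ • ((Xᵀ * X) *ᵥ (W *ᵥ x)) := by
      rw [hAdef, Matrix.smul_mulVec, ← Matrix.mulVec_mulVec]
    have h2 : ∑ i, (A *ᵥ x) i ^ 2 = γ ^ 2 * ∑ i, ((Xᵀ * X) *ᵥ (W *ᵥ x)) i ^ 2 := by
      rw [h1, Finset.mul_sum]
      refine Finset.sum_congr rfl fun i _ => ?_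
      simp [Pi.smul_apply, smul_eq_mul]; ring
    have h3 := herm_mulVec_sq_lower hT (le_of_lt hσ0) hσev (W *ᵥ x)
    rw [hWx x] at h3
    rw [h2, hsdef]
    calc (γ * σ) ^ 2 * ∑ j, x j ^ 2 = γ ^ 2 * (σ ^ 2 * ∑ j, x j ^ 2) := by ring
      _ ≤ γ ^ 2 * ∑ i, ((Xᵀ * X) *ᵥ (W *ᵥ x)) i ^ 2 :=
          mul_le_mul_of_nonneg_left h3 (by positivity)
  have hvecB : ∀ x : Fin p → ℝ,
      (s - β) * Real.sqrt (∑ j, x j ^ 2) ≤ Real.sqrt (∑ i, (B *ᵥ x) i ^ 2) := by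
    intro x
    have hBx : B *ᵥ x = A *ᵥ x + Δ *ᵥ x := by rw [hBA, Matrix.add_mulVec]
    have hA' : s * Real.sqrt (∑ j, x j ^ 2) ≤ Real.sqrt (∑ i, (A *ᵥ x) i ^ 2) := by
      have := Real.sqrt_le_sqrt (hAx x)
      rwa [Real.sqrt_mul (sq_nonneg s), Real.sqrt_sq hs0.le] at this
    have hΔ' : Real.sqrt (∑ i, (Δ *ᵥ x) i ^ 2) ≤ β * Real.sqrt (∑ j, x j ^ 2) := by
      have h1 := Real.sqrt_le_sqrt (mulVec_sumsq_le Δ x)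
      rw [Real.sqrt_mul (by positivity)] at h1
      have h2 : Real.sqrt (∑ i, ∑ j, Δ i j ^ 2) = frobNorm Δ := rfl
      rw [h2] at h1
      calc Real.sqrt (∑ i, (Δ *ᵥ x) i ^ 2)
          ≤ frobNorm Δ * Real.sqrt (∑ j, x j ^ 2) := h1
        _ ≤ β * Real.sqrt (∑ j, x j ^ 2) :=
            mul_le_mul_of_nonneg_right hΔβ (Real.sqrt_nonneg _)
    have htri : Real.sqrt (∑ i, (A *ᵥ x) i ^ 2)
        ≤ Real.sqrt (∑ i, (B *ᵥ x) i ^ 2) + Real.sqrt (∑ i, (Δ *ᵥ x) i ^ 2) := by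
      have hsub : toEuc (A *ᵥ x) = toEuc (B *ᵥ x) - toEuc (Δ *ᵥ x) := by
        rw [← toEuc_sub]; congr 1; rw [hBx, add_sub_cancel_right]
      have := norm_sub_le (toEuc (B *ᵥ x)) (toEuc (Δ *ᵥ x))
      rw [← hsub] at this
      simpa [toEuc_norm] using this
    nlinarith [hA', hΔ', htri]
  have hBxsq : ∀ x : Fin p → ℝ, (s - β) ^ 2 * ∑ j, x j ^ 2 ≤ ∑ i, (B *ᵥ x) i ^ 2 := by
    intro x
    have h1 := hvecB x
    have h2 : ((s - β) * Real.sqrt (∑ j, x j ^ 2)) ^ 2 ≤ Real.sqrt (∑ i, (B *ᵥ x) i ^ 2) ^ 2 :=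
      pow_le_pow_left₀ (by positivity) h1 2
    rw [mul_pow, Real.sq_sqrt (by positivity), Real.sq_sqrt (by positivity)] at h2
    exact h2
  -- Step 3 : the square root S of BᵀB
  have hpsd : (Bᴴ * B).PosSemidef := Matrix.posSemidef_conjTranspose_mul_self B
  set S : Matrix (Fin p) (Fin p) ℝ := hpsd.sqrt with hSdef
  have hS_psd : S.PosSemidef := hpsd.posSemidef_sqrt
  have hS_herm : S.IsHermitian := hS_psd.1
  have hSt : Sᵀ = S := real_herm_transpose hS_herm
  have hconjB : Bᴴ = Bᵀ := by
    ext i j; simp [Matrix.conjTranspose_apply]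
  have hSS : S * S = Bᵀ * B := by rw [hSdef, hpsd.sqrt_mul_self, hconjB]
  have hSx : ∀ x : Fin p → ℝ, ∑ i, (S *ᵥ x) i ^ 2 = ∑ i, (B *ᵥ x) i ^ 2 := by
    intro x
    rw [mulVec_sumsq_eq, mulVec_sumsq_eq, hSt, hSS]
  have hSev : ∀ i, s - β ≤ hS_herm.eigenvalues i :=
    herm_ev_lower_of_mulVec hS_herm hS_psd hsβ.le
      (fun x => by rw [hSx x]; exact hBxsq x)
  have hSquad : ∀ x : Fin p → ℝ, (s - β) * ∑ j, x j ^ 2 ≤ x ⬝ᵥ S *ᵥ x :=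
    herm_quad_lower hS_herm hSev
  have hdetS : IsUnit S.det := by
    rw [isUnit_iff_ne_zero]
    intro h0
    obtain ⟨v, hv0, hv⟩ := Matrix.exists_mulVec_eq_zero_iff.mpr h0
    have h1 := hBxsq v
    rw [← hSx v, hv] at h1
    have h2 : (0:ℝ) < (s - β) ^ 2 * ∑ j, v j ^ 2 := by
      have := sumsq_pos_of_ne_zero hv0
      positivity
    simp only [Pi.zero_apply] at h1
    simp at h1
    linarith
  -- Step 4 : the polar factor and the Sylvester identity
  set Wh : Matrix (Fin p) (Fin p) ℝ := B * S⁻¹ with hWhdef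
  have hpf : polarFactor (Xᵀ * Y) = Wh := rfl
  have hWht : Whᵀ = S⁻¹ * Bᵀ := by
    rw [hWhdef, Matrix.transpose_mul, Matrix.transpose_nonsing_inv, hSt]
  have hSWht : S * Whᵀ = Bᵀ := by
    rw [hWht, ← Matrix.mul_assoc, Matrix.mul_nonsing_inv _ hdetS, Matrix.one_mul]
  have hWhtB : Whᵀ * B = S := by
    rw [hWht, Matrix.mul_assoc, ← hSS, ← Matrix.mul_assoc,
      Matrix.nonsing_inv_mul _ hdetS, Matrix.one_mul]
  have hWho : Whᵀ * Wh = 1 := by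
    rw [hWhdef, Matrix.transpose_mul, Matrix.transpose_nonsing_inv, hSt, Matrix.mul_assoc,
      ← Matrix.mul_assoc Bᵀ B S⁻¹, ← hSS, Matrix.mul_assoc S S S⁻¹,
      Matrix.mul_nonsing_inv _ hdetS, Matrix.mul_one, Matrix.nonsing_inv_mul _ hdetS]
  have hWho' : Wh * Whᵀ = 1 := mul_eq_one_comm.mp hWho
  set H1 : Matrix (Fin p) (Fin p) ℝ := γ • (Wᵀ * (Xᵀ * X) * W) with hH1def
  have hWH1 : W * H1 = A := by
    rw [hH1def, hAdef, Matrix.mul_smul]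
    congr 1
    rw [← Matrix.mul_assoc, ← Matrix.mul_assoc, hW, Matrix.one_mul]
  have hH1WA : H1 = Wᵀ * A := by
    rw [hAdef, hH1def, Matrix.mul_smul]
    congr 1
    rw [Matrix.mul_assoc]
  have hAtW : Aᵀ * W = Wᵀ * A := by
    rw [hAdef, Matrix.transpose_smul, Matrix.transpose_mul, real_herm_transpose hT,
      Matrix.smul_mul, Matrix.mul_smul]
    congr 1
    rw [Matrix.mul_assoc]
  set E : Matrix (Fin p) (Fin p) ℝ := Whᵀ * W - 1 with hEdef
  set R : Matrix (Fin p) (Fin p) ℝ := Δᵀ * W - Whᵀ * Δ with hRdef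
  have hSyl : S * E + E * H1 = R := by
    rw [hEdef, hRdef, Matrix.mul_sub, Matrix.sub_mul, Matrix.mul_one, Matrix.one_mul,
      ← Matrix.mul_assoc S, hSWht, Matrix.mul_assoc Whᵀ W H1, hWH1, hH1WA, hΔdef,
      Matrix.transpose_sub, Matrix.sub_mul, Matrix.mul_sub, hAtW, ← hWhtB]
    abel
  -- Step 5 : trace inequalities
  have hfn2E : ∑ i, ∑ j, E i j ^ 2 = frobNorm E ^ 2 := by
    rw [frobNorm, Real.sq_sqrt (by positivity)]
  have hI1 : (s - β) * ∑ i, ∑ j, E i j ^ 2 ≤ ∑ i, ∑ j, E i j * (S * E) i j := by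
    rw [inner_mul_left, Finset.sum_comm, Finset.mul_sum]
    refine Finset.sum_le_sum fun j _ => ?_
    exact hSquad (fun i => E i j)
  have hI2 : s * ∑ i, ∑ j, E i j ^ 2 ≤ ∑ i, ∑ j, E i j * (E * H1) i j := by
    rw [inner_mul_right, Finset.mul_sum]
    refine Finset.sum_le_sum fun i _ => ?_
    -- row quadratic bound for H1
    have hH1quad : ∀ x : Fin p → ℝ, s * ∑ j, x j ^ 2 ≤ x ⬝ᵥ H1 *ᵥ x := by
      intro x
      have h1 : H1 *ᵥ x = γ • (Wᵀ *ᵥ ((Xᵀ * X) *ᵥ (W *ᵥ x))) := by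
        rw [hH1def, Matrix.smul_mulVec, ← Matrix.mulVec_mulVec, ← Matrix.mulVec_mulVec]
      have h2 : x ⬝ᵥ H1 *ᵥ x = γ * ((W *ᵥ x) ⬝ᵥ (Xᵀ * X) *ᵥ (W *ᵥ x)) := by
        rw [h1, dotProduct_smul, smul_eq_mul]
        congr 1
        rw [Matrix.dotProduct_mulVec x Wᵀ, Matrix.vecMul_transpose]
      have h3 := herm_quad_lower hT hσev (W *ᵥ x)
      rw [hWx x] at h3
      rw [h2, hsdef]
      calc γ * σ * ∑ j, x j ^ 2 = γ * (σ * ∑ j, x j ^ 2) := by ring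
        _ ≤ γ * ((W *ᵥ x) ⬝ᵥ (Xᵀ * X) *ᵥ (W *ᵥ x)) :=
            mul_le_mul_of_nonneg_left h3 hγ0.le
    exact hH1quad (E i)
  have hRβ : frobNorm R ≤ 2 * β := by
    have h1 : frobNorm (Δᵀ * W) = frobNorm Δ := by
      rw [frobNorm_mul_orth_right W hW, frobNorm_transpose]
    have h2 : frobNorm (Whᵀ * Δ) = frobNorm Δ := by
      rw [frobNorm_mul_orth_left Whᵀ (by rw [Matrix.transpose_transpose]; exact hWho') Δ]
    calc frobNorm R ≤ frobNorm (Δᵀ * W) + frobNorm (Whᵀ * Δ) := by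
          rw [hRdef]; exact frobNorm_sub_le _ _
      _ = frobNorm Δ + frobNorm Δ := by rw [h1, h2]
      _ ≤ 2 * β := by linarith
  have hsplit : ∑ i, ∑ j, E i j * R i j
      = (∑ i, ∑ j, E i j * (S * E) i j) + ∑ i, ∑ j, E i j * (E * H1) i j := by
    rw [← Finset.sum_add_distrib]
    refine Finset.sum_congr rfl fun i _ => ?_
    rw [← Finset.sum_add_distrib]
    refine Finset.sum_congr rfl fun j _ => ?_
    have : R i j = (S * E) i j + (E * H1) i j := by
      rw [← hSyl]; rfl
    rw [this]; ring
  have hmain : (2 * s - β) * frobNorm E ^ 2 ≤ frobNorm E * (2 * β) := by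
    have h1 : (2 * s - β) * frobNorm E ^ 2 ≤ ∑ i, ∑ j, E i j * R i j := by
      rw [hsplit, ← hfn2E]
      have := add_le_add hI1 hI2
      linarith [hI1, hI2]
    have h2 : ∑ i, ∑ j, E i j * R i j ≤ frobNorm E * frobNorm R := matrix_inner_le E R
    have h3 : frobNorm E * frobNorm R ≤ frobNorm E * (2 * β) :=
      mul_le_mul_of_nonneg_left hRβ (frobNorm_nonneg E)
    linarith
  -- Step 6 : conclusion
  have hEfinal : frobNorm (polarFactor (Xᵀ * Y) - W) = frobNorm E := by
    have hWE : Wh * E = W - Wh := by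
      rw [hEdef, Matrix.mul_sub, Matrix.mul_one, ← Matrix.mul_assoc, hWho', Matrix.one_mul]
    have h1 : polarFactor (Xᵀ * Y) - W = -(Wh * E) := by
      rw [hpf, hWE]; abel
    rw [h1, frobNorm_neg, frobNorm_mul_orth_left Wh hWho E]
  have he0 : 0 ≤ frobNorm E := frobNorm_nonneg E
  have hgoalden : γ * σ - 2 * γ * m - frobNorm (Xᵀ * V) = s - β := by
    rw [hsdef, hβdef]; ring
  rw [hEfinal, hgoalden]
  rcases eq_or_lt_of_le he0 with he | he
  · rw [← he]
    positivity
  · have h4 : (2 * s - β) * frobNorm E ≤ 2 * β := by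
      have h5 : (2 * s - β) * frobNorm E * frobNorm E ≤ (2 * β) * frobNorm E := by
        calc (2 * s - β) * frobNorm E * frobNorm E = (2 * s - β) * frobNorm E ^ 2 := by ring
          _ ≤ frobNorm E * (2 * β) := hmain
          _ = (2 * β) * frobNorm E := by ring
      exact le_of_mul_le_mul_right h5 he
    have h6 : frobNorm E * (s - β) ≤ β := by nlinarith [mul_nonneg hβ0 he0]
    rw [le_div_iff₀ hsβ]
    linarith [h6]
end
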